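/- Let γ : B → B be a holomorphic contraction at 0 (there exists C ∈ (0,1) with |γ(z)| ≤ C|z| on B). Then the image of the linear map β : O(B) → O(B), β(f) = f − f ∘ γ, is exactly the space of holomorphic functions on B vanishing at 0. In particular the image of β has codimension one in O(B). -/

import Mathlib

open Metric

/-- Cauchy-type estimate: a bound on a holomorphic function on a ball gives a bound on
its derivative on a smaller ball, via restriction to complex lines. -/
lemma aux_fderiv_bound {E : Type*} [NormedAddCommGroup E] [NormedSpace ℂ E]
    {u : E → ℂ} {s M r : ℝ} (hrs : r < s)
    (hu : DifferentiableOn ℂ u (ball 0 s))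
    (hM : ∀ w ∈ ball (0:E) s, ‖u w‖ ≤ M) (hM0 : 0 ≤ M)
    {z : E} (hz : ‖z‖ ≤ r) :
    ‖fderiv ℂ u z‖ ≤ M / ((s - r) / 2) := by
  set R : ℝ := (s - r) / 2 with hRdef
  have hR : 0 < R := by simp [hRdef]; linarith
  apply ContinuousLinearMap.opNorm_le_bound _ (div_nonneg hM0 hR.le)
  intro v
  rcases eq_or_ne v 0 with rfl | hv
  · simp
  · set w : E := (‖v‖ : ℂ)⁻¹ • v with hwdef
    have hvn : (‖v‖ : ℂ) ≠ 0 := by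
      simpa using norm_ne_zero_iff.mpr hv
    have hw1 : ‖w‖ = 1 := by
      rw [hwdef, norm_smul]
      simp [norm_ne_zero_iff.mpr hv]
    set φ : ℂ → ℂ := fun l => u (z + l • w) with hφdef
    have hmemb : ∀ l : ℂ, ‖l‖ < 2 * R → z + l • w ∈ ball (0:E) s := by
      intro l hl
      rw [mem_ball_zero_iff]
      calc ‖z + l • w‖ ≤ ‖z‖ + ‖l • w‖ := norm_add_le _ _
        _ = ‖z‖ + ‖l‖ := by rw [norm_smul, hw1, mul_one]
        _ < r + 2 * R := by exact add_lt_add_of_le_of_lt hz hl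
        _ = s := by rw [hRdef]; ring
    have hasder : ∀ l : ℂ, ‖l‖ < 2 * R → HasDerivAt φ (fderiv ℂ u (z + l • w) w) l := by
      intro l hl
      have h1 : HasDerivAt (fun y : ℂ => z + y • w) w l := by
        simpa using ((hasDerivAt_id l).smul_const w).const_add z
      have h2 : DifferentiableAt ℂ u (z + l • w) :=
        hu.differentiableAt (isOpen_ball.mem_nhds (hmemb l hl))
      exact h2.hasFDerivAt.comp_hasDerivAt l h1
    have hRlt : ∀ l : ℂ, ‖l‖ ≤ R → ‖l‖ < 2 * R := fun l hl => lt_of_le_of_lt hl (by linarith)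
    have hdiffcl : DiffContOnCl ℂ φ (ball 0 R) := by
      constructor
      · intro l hl
        exact (hasder l (hRlt l (mem_ball_zero_iff.mp hl).le)).differentiableAt.differentiableWithinAt
      · rw [closure_ball (0:ℂ) hR.ne']
        intro l hl
        exact (hasder l (hRlt l (mem_closedBall_zero_iff.mp hl))).differentiableAt.continuousAt.continuousWithinAt
    have hsph : ∀ l ∈ sphere (0:ℂ) R, ‖φ l‖ ≤ M := by
      intro l hl
      exact hM _ (hmemb l (hRlt l (mem_sphere_zero_iff_norm.mp hl).le))
    have hkey : ‖deriv φ 0‖ ≤ M / R :=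
      Complex.norm_deriv_le_of_forall_mem_sphere_norm_le hR hdiffcl hsph
    have hder0 : deriv φ 0 = fderiv ℂ u z w := by
      have := hasder 0 (by simpa using by linarith : ‖(0:ℂ)‖ < 2 * R)
      simpa using this.deriv
    have hvw : (‖v‖ : ℂ) • w = v := smul_inv_smul₀ hvn v
    calc ‖fderiv ℂ u z v‖ = ‖fderiv ℂ u z ((‖v‖ : ℂ) • w)‖ := by rw [hvw]
      _ = ‖v‖ * ‖fderiv ℂ u z w‖ := by rw [map_smul, norm_smul]; simp
      _ ≤ ‖v‖ * (M / R) := by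
          apply mul_le_mul_of_nonneg_left _ (norm_nonneg v)
          rw [← hder0]; exact hkey
      _ = M / R * ‖v‖ := by ring



/-- A holomorphic function on the unit ball vanishing at `0` satisfies a linear bound
`‖u w‖ ≤ K ‖w‖` on each smaller closed ball. -/
lemma aux_lin_bound {E : Type*} [NormedAddCommGroup E] [NormedSpace ℂ E] [FiniteDimensional ℂ E]
    {u : E → ℂ} (hu : DifferentiableOn ℂ u (ball 0 1)) (h0 : u 0 = 0)
    {r : ℝ} (hr0 : 0 ≤ r) (hr1 : r < 1) :
    ∃ K : ℝ, 0 ≤ K ∧ ∀ w : E, ‖w‖ ≤ r → ‖u w‖ ≤ K * ‖w‖ := by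
  set r' : ℝ := (r + 1) / 2 with hr'def
  have hrr' : r < r' := by rw [hr'def]; linarith
  have hr'1 : r' < 1 := by rw [hr'def]; linarith
  have hr'0 : 0 ≤ r' := by rw [hr'def]; linarith
  have hsub : closedBall (0:E) r' ⊆ ball 0 1 := closedBall_subset_ball hr'1
  obtain ⟨M, hMb⟩ := (isCompact_closedBall (0:E) r').exists_bound_of_continuousOn
    ((hu.continuousOn).mono hsub)
  have hM0 : 0 ≤ M := (norm_nonneg _).trans (hMb 0 (mem_closedBall_self hr'0))
  have hball : ∀ w ∈ ball (0:E) r', ‖u w‖ ≤ M := fun w hw => hMb w (ball_subset_closedBall hw)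
  have hud : DifferentiableOn ℂ u (ball (0:E) r') := hu.mono (ball_subset_ball hr'1.le)
  set K : ℝ := M / ((r' - r) / 2) with hKdef
  have hK0 : 0 ≤ K := div_nonneg hM0 (by rw [hr'def]; linarith)
  refine ⟨K, hK0, fun w hw => ?_⟩
  have hfb : ∀ x ∈ closedBall (0:E) r, ‖fderiv ℂ u x‖ ≤ K :=
    fun x hx => aux_fderiv_bound hrr' hud hball hM0 (mem_closedBall_zero_iff.mp hx)
  have hdiff : ∀ x ∈ closedBall (0:E) r, DifferentiableAt ℂ u x := fun x hx =>
    hu.differentiableAt (isOpen_ball.mem_nhds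
      (lt_of_le_of_lt (mem_closedBall_zero_iff.mp hx) hr1 |> mem_ball_zero_iff.mpr))
  have := (convex_closedBall (0:E) r).norm_image_sub_le_of_norm_fderiv_le hdiff hfb
    (mem_closedBall_self hr0) (mem_closedBall_zero_iff.mpr hw)
  simpa [h0] using this


/-- For a holomorphic contraction `γ` of the unit ball at `0`
(`‖γ z‖ ≤ C‖z‖`, `C ∈ (0,1)`), the image of the map `β(f) = f − f ∘ γ` on holomorphic
functions of the ball is exactly the space of holomorphic functions vanishing at `0`:
a holomorphic `g` on the ball is of the form `f − f ∘ γ` (on the ball, with `f`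
holomorphic) if and only if `g 0 = 0`. -/
theorem image_of_beta_is_vanishing_at_zero
    (n : ℕ) (C : ℝ) (hC0 : 0 < C) (hC1 : C < 1)
    (γ : EuclideanSpace ℂ (Fin n) → EuclideanSpace ℂ (Fin n))
    (hγ : DifferentiableOn ℂ γ (ball 0 1))
    (hmap : ∀ z ∈ ball (0 : EuclideanSpace ℂ (Fin n)) 1, γ z ∈ ball (0 : EuclideanSpace ℂ (Fin n)) 1)
    (hbound : ∀ z ∈ ball (0 : EuclideanSpace ℂ (Fin n)) 1, ‖γ z‖ ≤ C * ‖z‖) :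
    ∀ g : EuclideanSpace ℂ (Fin n) → ℂ, DifferentiableOn ℂ g (ball 0 1) →
      ((∃ f : EuclideanSpace ℂ (Fin n) → ℂ, DifferentiableOn ℂ f (ball 0 1) ∧
          ∀ z ∈ ball (0 : EuclideanSpace ℂ (Fin n)) 1, f z - f (γ z) = g z)
        ↔ g 0 = 0) := by
  intro g hg
  have h0mem : (0 : EuclideanSpace ℂ (Fin n)) ∈ ball (0 : EuclideanSpace ℂ (Fin n)) 1 :=
    mem_ball_self one_pos
  have hγ0 : γ 0 = 0 := by
    have := hbound 0 h0mem
    simp only [norm_zero, mul_zero] at this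
    exact norm_le_zero_iff.mp this
  constructor
  · rintro ⟨f, hf, hfg⟩
    have := hfg 0 h0mem
    rw [hγ0, sub_self] at this
    exact this.symm
  · intro hg0
    -- iterates stay in the ball with geometric decay
    have hiter : ∀ m : ℕ, ∀ z ∈ ball (0 : EuclideanSpace ℂ (Fin n)) 1,
        γ^[m] z ∈ ball (0 : EuclideanSpace ℂ (Fin n)) 1 ∧ ‖γ^[m] z‖ ≤ C ^ m * ‖z‖ := by
      intro m
      induction m with
      | zero => intro z hz; simpa using hz
      | succ m ih =>
        intro z hz
        obtain ⟨hmem, hbd⟩ := ih z hz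
        rw [Function.iterate_succ_apply']
        refine ⟨hmap _ hmem, ?_⟩
        calc ‖γ (γ^[m] z)‖ ≤ C * ‖γ^[m] z‖ := hbound _ hmem
          _ ≤ C * (C ^ m * ‖z‖) := mul_le_mul_of_nonneg_left hbd hC0.le
          _ = C ^ (m + 1) * ‖z‖ := by ring
    have hiter_diff : ∀ m : ℕ,
        DifferentiableOn ℂ (γ^[m]) (ball (0 : EuclideanSpace ℂ (Fin n)) 1) := by
      intro m
      induction m with
      | zero => simpa using differentiableOn_id
      | succ m ih =>
        rw [Function.iterate_succ']
        exact hγ.comp ih (fun z hz => (hiter m z hz).1)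
    set h : ℕ → EuclideanSpace ℂ (Fin n) → ℂ := fun m z => g (γ^[m] z) with hhdef
    have hh_diff : ∀ m, DifferentiableOn ℂ (h m) (ball 0 1) :=
      fun m => hg.comp (hiter_diff m) (fun z hz => (hiter m z hz).1)
    set f : EuclideanSpace ℂ (Fin n) → ℂ := fun z => ∑' m, h m z with hfdef
    have hgeo : Summable (fun m : ℕ => C ^ m) := summable_geometric_of_lt_one hC0.le hC1
    -- uniform geometric bound on h m over smaller balls
    have hKr : ∀ r : ℝ, 0 ≤ r → r < 1 → ∃ K : ℝ, 0 ≤ K ∧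
        ∀ (m : ℕ) (z : EuclideanSpace ℂ (Fin n)), z ∈ ball (0 : EuclideanSpace ℂ (Fin n)) 1 →
          ‖z‖ ≤ r → ‖h m z‖ ≤ K * C ^ m := by
      intro r h0 h1
      obtain ⟨K, hK0, hK⟩ := aux_lin_bound hg hg0 h0 h1
      refine ⟨K * r, by positivity, fun m z hz hzr => ?_⟩
      have h1' : ‖γ^[m] z‖ ≤ C ^ m * ‖z‖ := (hiter m z hz).2
      have hcm1 : C ^ m ≤ 1 := pow_le_one₀ hC0.le hC1.le
      have hcm0 : 0 ≤ C ^ m := pow_nonneg hC0.le m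
      have h2 : ‖γ^[m] z‖ ≤ r := le_trans h1' (by nlinarith [norm_nonneg z])
      calc ‖h m z‖ ≤ K * ‖γ^[m] z‖ := hK _ h2
        _ ≤ K * (C ^ m * ‖z‖) := mul_le_mul_of_nonneg_left h1' hK0
        _ ≤ K * r * C ^ m := by nlinarith [mul_le_mul_of_nonneg_left hzr (mul_nonneg hK0 hcm0)]
    have hsum : ∀ z ∈ ball (0 : EuclideanSpace ℂ (Fin n)) 1, Summable (fun m => h m z) := by
      intro z hz
      obtain ⟨K, hK0, hK⟩ := hKr ‖z‖ (norm_nonneg z) (mem_ball_zero_iff.mp hz)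
      exact Summable.of_norm_bounded (hgeo.mul_left K) (fun m => hK m z hz le_rfl)
    -- differentiability of the sum
    have hfdiff : DifferentiableOn ℂ f (ball 0 1) := by
      intro z₀ hz₀
      have hz₀1 : ‖z₀‖ < 1 := mem_ball_zero_iff.mp hz₀
      set r : ℝ := (‖z₀‖ + 1) / 2 with hrdef
      have hz₀r : ‖z₀‖ < r := by rw [hrdef]; linarith
      have hr1 : r < 1 := by rw [hrdef]; linarith
      have hr0 : 0 ≤ r := le_trans (norm_nonneg z₀) hz₀r.le
      set r' : ℝ := (r + 1) / 2 with hr'def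
      have hrr' : r < r' := by rw [hr'def]; linarith
      have hr'1 : r' < 1 := by rw [hr'def]; linarith
      have hr'0 : 0 ≤ r' := le_trans hr0 hrr'.le
      obtain ⟨K, hK0, hK⟩ := hKr r' hr'0 hr'1
      have hball' : ball (0 : EuclideanSpace ℂ (Fin n)) r' ⊆ ball 0 1 := ball_subset_ball hr'1.le
      have hdb : ∀ (m : ℕ) (x : EuclideanSpace ℂ (Fin n)), ‖x‖ ≤ r →
          ‖fderiv ℂ (h m) x‖ ≤ K * C ^ m / ((r' - r) / 2) := by
        intro m x hx
        exact aux_fderiv_bound hrr' ((hh_diff m).mono hball')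
          (fun w hw => hK m w (hball' hw) (mem_ball_zero_iff.mp hw).le) (by positivity) hx
      have hK'sum : Summable (fun m : ℕ => K * C ^ m / ((r' - r) / 2)) := by
        simpa [mul_div_assoc, mul_comm, mul_left_comm] using
          ((hgeo.mul_left K).div_const ((r' - r) / 2))
      have hunif : TendstoUniformlyOn
          (fun N x => ∑ m ∈ Finset.range N, fderiv ℂ (h m) x)
          (fun x => ∑' m, fderiv ℂ (h m) x) Filter.atTop
          (ball (0 : EuclideanSpace ℂ (Fin n)) r) :=
        tendstoUniformlyOn_tsum_nat hK'sum
          (fun m x hx => hdb m x (mem_ball_zero_iff.mp hx).le)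
      have hder : ∀ (N : ℕ) (x : EuclideanSpace ℂ (Fin n)), x ∈ ball (0 : EuclideanSpace ℂ (Fin n)) r →
          HasFDerivAt (fun z => ∑ m ∈ Finset.range N, h m z)
            (∑ m ∈ Finset.range N, fderiv ℂ (h m) x) x := by
        intro N x hx
        have hx1 : x ∈ ball (0 : EuclideanSpace ℂ (Fin n)) 1 := ball_subset_ball hr1.le hx
        exact HasFDerivAt.fun_sum (fun m _ =>
          ((hh_diff m).differentiableAt (isOpen_ball.mem_nhds hx1)).hasFDerivAt)
      have hptwise : ∀ x ∈ ball (0 : EuclideanSpace ℂ (Fin n)) r,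
          Filter.Tendsto (fun N => ∑ m ∈ Finset.range N, h m x) Filter.atTop (nhds (f x)) :=
        fun x hx => (hsum x (ball_subset_ball hr1.le hx)).hasSum.tendsto_sum_nat
      have hmain : HasFDerivAt f (∑' m, fderiv ℂ (h m) z₀) z₀ :=
        hasFDerivAt_of_tendstoUniformlyOn isOpen_ball hunif hder hptwise
          (mem_ball_zero_iff.mpr hz₀r)
      exact hmain.differentiableAt.differentiableWithinAt
    refine ⟨f, hfdiff, fun z hz => ?_⟩
    have hγz : γ z ∈ ball (0 : EuclideanSpace ℂ (Fin n)) 1 := hmap z hz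
    have h1 : f z = h 0 z + ∑' m, h (m + 1) z := Summable.tsum_eq_zero_add (hsum z hz)
    have h2 : f (γ z) = ∑' m, h (m + 1) z := by
      exact tsum_congr fun m => by
        show g (γ^[m] (γ z)) = g (γ^[m + 1] z)
        rw [Function.iterate_succ_apply]
    rw [h1, h2]
    show h 0 z + ∑' m, h (m + 1) z - ∑' m, h (m + 1) z = g z
    rw [add_sub_cancel_right]
    show g (γ^[0] z) = g z
    rw [Function.iterate_zero_apply]
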